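/- arXiv:1007.1883 — 3 statements merged into one kernel-verified Lean document; each statement's English description precedes it below -/
import Mathlib

section
/- Let k ∈ H^1_1([0,T]) be a kernel and H ∈ C^1(ℝ). Then for any sufficiently smooth function u on (0,T) and for a.a. t ∈ (0,T): H'(u(t)) d/dt (k∗u)(t) = d/dt (k∗H(u))(t) + (−H(u(t)) + H'(u(t))u(t)) k(t) + ∫_0^t [H(u(t−s)) − H(u(t)) − H'(u(t))(u(t−s) − u(t))] (−k̇(s)) ds, where (k∗u)(t) = ∫_0^t k(t−τ)u(τ) dτ. -/
open MeasureTheory intervalIntegral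

/-- Convolution on the positive half-line: (k∗u)(t) = ∫_0^t k(t-τ) u(τ) dτ. -/
noncomputable def conv (k u : ℝ → ℝ) (t : ℝ) : ℝ := ∫ τ in (0:ℝ)..t, k (t - τ) * u τ

lemma fubini_tri (h : ℝ → ℝ → ℝ) (hh : Continuous (Function.uncurry h)) {t : ℝ} (ht : 0 ≤ t) :
    ∫ τ in (0:ℝ)..t, (∫ x in τ..t, h τ x) = ∫ x in (0:ℝ)..t, (∫ τ in (0:ℝ)..x, h τ x) := by
  set μ := volume.restrict (Set.Ioc (0:ℝ) t) with hμ
  set f : ℝ → ℝ → ℝ := fun τ x => Set.indicator (Set.Ioi τ) (h τ) x with hf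
  have hfint : Integrable (Function.uncurry f) (μ.prod μ) := by
    have hS : MeasurableSet {p : ℝ × ℝ | p.1 < p.2} := measurableSet_lt measurable_fst measurable_snd
    have heq : Function.uncurry f = Set.indicator {p : ℝ × ℝ | p.1 < p.2} (Function.uncurry h) := by
      ext ⟨τ, x⟩
      by_cases hc : τ < x <;> simp [Function.uncurry, f, Set.indicator, hc]
    rw [heq]
    refine Integrable.indicator ?_ hS
    rw [hμ, Measure.prod_restrict]
    exact ((hh.continuousOn.integrableOn_compact (isCompact_Icc.prod isCompact_Icc)).mono_set
      (Set.prod_mono Set.Ioc_subset_Icc_self Set.Ioc_subset_Icc_self))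
  have hL : ∀ τ ∈ Set.Ioc (0:ℝ) t, (∫ x in τ..t, h τ x) = ∫ x, f τ x ∂μ := by
    intro τ hτ
    rw [intervalIntegral.integral_of_le hτ.2, hμ,
      MeasureTheory.setIntegral_indicator measurableSet_Ioi]
    have hset : Set.Ioc 0 t ∩ Set.Ioi τ = Set.Ioc τ t := by
      ext y
      constructor
      · rintro ⟨⟨_, h2⟩, h3⟩; exact ⟨h3, h2⟩
      · rintro ⟨h1, h2⟩; exact ⟨⟨hτ.1.trans h1, h2⟩, h1⟩
    rw [hset]
  have hR : ∀ x ∈ Set.Ioc (0:ℝ) t, (∫ τ, f τ x ∂μ) = ∫ τ in (0:ℝ)..x, h τ x := by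
    intro x hx
    have h1 : (fun τ => f τ x) = Set.indicator (Set.Iio x) (fun τ => h τ x) := by
      ext τ; by_cases hc : τ < x <;> simp [f, Set.indicator, hc]
    rw [h1, hμ, MeasureTheory.setIntegral_indicator measurableSet_Iio]
    have h2 : Set.Ioc 0 t ∩ Set.Iio x = Set.Ioo 0 x := by
      ext y
      constructor
      · rintro ⟨⟨h1', _⟩, h3⟩; exact ⟨h1', h3⟩
      · rintro ⟨h1', h2'⟩; exact ⟨⟨h1', h2'.le.trans hx.2⟩, h2'⟩
    rw [h2, ← MeasureTheory.integral_Ioc_eq_integral_Ioo, ← intervalIntegral.integral_of_le hx.1.le]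
  calc ∫ τ in (0:ℝ)..t, (∫ x in τ..t, h τ x)
      = ∫ τ, (∫ x, f τ x ∂μ) ∂μ := by
        rw [intervalIntegral.integral_of_le ht, hμ]
        exact MeasureTheory.setIntegral_congr_fun measurableSet_Ioc (fun τ hτ => hL τ hτ)
    _ = ∫ x, (∫ τ, f τ x ∂μ) ∂μ := MeasureTheory.integral_integral_swap hfint
    _ = ∫ x in (0:ℝ)..t, (∫ τ in (0:ℝ)..x, h τ x) := by
        rw [intervalIntegral.integral_of_le ht, hμ]
        exact MeasureTheory.setIntegral_congr_fun measurableSet_Ioc (fun x hx => hR x hx)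

lemma lemA (T : ℝ) (κ d g : ℝ → ℝ) (hd : Continuous d) (hg : Continuous g)
    (hFTC : ∀ a ∈ Set.Icc (0:ℝ) T, κ a = κ 0 + ∫ σ in (0:ℝ)..a, d σ)
    {t : ℝ} (ht : t ∈ Set.Ioo (0:ℝ) T) :
    HasDerivAt (conv κ g) (κ 0 * g t + ∫ x in (0:ℝ)..t, d (t - x) * g x) t := by
  have hdint : ∀ a b : ℝ, IntervalIntegrable d volume a b := fun a b => hd.intervalIntegrable a b
  have hP : Continuous (fun y : ℝ => ∫ σ in (0:ℝ)..y, d σ) :=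
    intervalIntegral.continuous_primitive hdint 0
  set w : ℝ → ℝ := fun x => ∫ τ in (0:ℝ)..x, d (x - τ) * g τ with hwdef
  have huncurry : Continuous (Function.uncurry fun x τ => d (x - τ) * g τ) := by
    have : Continuous fun p : ℝ × ℝ => d (p.1 - p.2) * g p.2 :=
      (hd.comp (continuous_fst.sub continuous_snd)).mul (hg.comp continuous_snd)
    exact this
  have hwc : Continuous w :=
    intervalIntegral.continuous_parametric_intervalIntegral_of_continuous huncurry continuous_id
  have key : ∀ t' ∈ Set.Icc (0:ℝ) T, conv κ g t' = ∫ x in (0:ℝ)..t', (κ 0 * g x + w x) := by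
    intro t' ht'
    have h1 : conv κ g t'
        = ∫ τ in (0:ℝ)..t', (κ 0 * g τ + (∫ σ in (0:ℝ)..(t' - τ), d σ) * g τ) := by
      unfold conv
      apply intervalIntegral.integral_congr
      intro τ hτ
      rw [Set.uIcc_of_le ht'.1] at hτ
      have h2 : t' - τ ∈ Set.Icc (0:ℝ) T :=
        ⟨sub_nonneg.2 hτ.2, le_trans (by linarith [hτ.1]) ht'.2⟩
      dsimp only
      rw [hFTC _ h2]; ring
    have hPgc : Continuous fun τ => (∫ σ in (0:ℝ)..(t' - τ), d σ) * g τ :=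
      (hP.comp (continuous_const.sub continuous_id)).mul hg
    rw [h1, intervalIntegral.integral_add (f := fun τ => κ 0 * g τ)
      ((continuous_const.mul hg).intervalIntegrable _ _)
      (hPgc.intervalIntegrable _ _)]
    have h3 : ∫ τ in (0:ℝ)..t', (∫ σ in (0:ℝ)..(t' - τ), d σ) * g τ
        = ∫ τ in (0:ℝ)..t', (∫ x in τ..t', d (x - τ) * g τ) := by
      apply intervalIntegral.integral_congr
      intro τ hτ
      dsimp only
      rw [intervalIntegral.integral_mul_const, intervalIntegral.integral_comp_sub_right d τ]
      simp
    rw [h3, fubini_tri (fun τ x => d (x - τ) * g τ)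
      (by exact (hd.comp (continuous_snd.sub continuous_fst)).mul (hg.comp continuous_fst)) ht'.1,
      ← intervalIntegral.integral_add (f := fun τ => κ 0 * g τ)
        ((continuous_const.mul hg).intervalIntegrable _ _)
        (hwc.intervalIntegrable _ _)]
  have hcont2 : Continuous fun x => κ 0 * g x + w x := (continuous_const.mul hg).add hwc
  have hD : HasDerivAt (fun t' => ∫ x in (0:ℝ)..t', (κ 0 * g x + w x)) (κ 0 * g t + w t) t :=
    intervalIntegral.integral_hasDerivAt_right (hcont2.intervalIntegrable _ _)
      (hcont2.stronglyMeasurableAtFilter _ _) hcont2.continuousAt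
  have hEq : conv κ g =ᶠ[nhds t] fun t' => ∫ x in (0:ℝ)..t', (κ 0 * g x + w x) := by
    filter_upwards [Icc_mem_nhds ht.1 ht.2] with t' ht' using key t' ht'
  exact hD.congr_of_eventuallyEq hEq

theorem stmt_3 (T : ℝ) (hT : 0 < T) (k u H : ℝ → ℝ)
    (hk : ContDiffOn ℝ 1 k (Set.Icc 0 T))
    (hH : ContDiff ℝ 1 H)
    (hu : ContDiffOn ℝ 1 u (Set.Icc 0 T)) :
    ∀ᵐ t ∂(volume.restrict (Set.Ioo 0 T)),
      deriv H (u t) * deriv (conv k u) t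
        = deriv (conv k (fun τ => H (u τ))) t
          + (-(H (u t)) + deriv H (u t) * u t) * k t
          + ∫ s in (0:ℝ)..t,
              (H (u (t - s)) - H (u t) - deriv H (u t) * (u (t - s) - u t))
                * (-(deriv k s)) := by
  have hT0 : (0:ℝ) ≤ T := hT.le
  set c : ℝ → ℝ := fun x => max (min x T) 0 with hcdef
  have hc : Continuous c := (continuous_id.min continuous_const).max continuous_const
  have hcmem : ∀ x, c x ∈ Set.Icc (0:ℝ) T :=
    fun x => ⟨le_max_right _ _, max_le (min_le_right x T) hT0⟩
  have hceq : ∀ x ∈ Set.Icc (0:ℝ) T, c x = x := by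
    intro x hx
    simp [hcdef, min_eq_left hx.2, max_eq_left hx.1]
  set K : ℝ → ℝ := fun x => k (c x) with hKdef
  have hKc : Continuous K := hk.continuousOn.comp_continuous hc hcmem
  have hk'c : ContinuousOn (fun x => derivWithin k (Set.Icc 0 T) x) (Set.Icc 0 T) :=
    hk.continuousOn_derivWithin (uniqueDiffOn_Icc hT) le_rfl
  set K' : ℝ → ℝ := fun x => derivWithin k (Set.Icc 0 T) (c x) with hK'def
  have hK'c : Continuous K' := hk'c.comp_continuous hc hcmem
  set U : ℝ → ℝ := fun x => u (c x) with hUdef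
  have hUc : Continuous U := hu.continuousOn.comp_continuous hc hcmem
  have hHUc : Continuous fun x => H (U x) := hH.continuous.comp hUc
  have hderiv : ∀ s ∈ Set.Ioo (0:ℝ) T, HasDerivAt k (K' s) s := by
    intro s hs
    have hmem : Set.Icc (0:ℝ) T ∈ nhds s := Icc_mem_nhds hs.1 hs.2
    have hdw : DifferentiableWithinAt ℝ k (Set.Icc 0 T) s :=
      (hk.differentiableOn one_ne_zero) s ⟨hs.1.le, hs.2.le⟩
    have hda : DifferentiableAt ℝ k s := hdw.differentiableAt hmem
    have he : K' s = deriv k s := by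
      rw [hK'def]
      dsimp only
      rw [hceq s ⟨hs.1.le, hs.2.le⟩, derivWithin_of_mem_nhds hmem]
    rw [he]
    exact hda.hasDerivAt
  have hFTC : ∀ a ∈ Set.Icc (0:ℝ) T, K a = K 0 + ∫ σ in (0:ℝ)..a, K' σ := by
    intro a ha
    have hval : ∫ σ in (0:ℝ)..a, K' σ = k a - k 0 :=
      intervalIntegral.integral_eq_sub_of_hasDeriv_right_of_le ha.1
        (hk.continuousOn.mono (Set.Icc_subset_Icc le_rfl ha.2))
        (fun σ hσ =>
          ((hderiv σ ⟨hσ.1, lt_of_lt_of_le hσ.2 ha.2⟩).hasDerivWithinAt))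
        (hK'c.intervalIntegrable _ _)
    have e1 : K a = k a := by rw [hKdef]; dsimp only; rw [hceq a ha]
    have e0 : K 0 = k 0 := by rw [hKdef]; dsimp only; rw [hceq 0 ⟨le_rfl, hT0⟩]
    rw [hval, e1, e0]; ring
  rw [MeasureTheory.ae_restrict_iff' measurableSet_Ioo]
  refine Filter.Eventually.of_forall (fun t ht => ?_)
  have htIcc : t ∈ Set.Icc (0:ℝ) T := ⟨ht.1.le, ht.2.le⟩
  set v := deriv H (u t) with hv
  have hdU := lemA T K K' U hK'c hUc hFTC ht
  have hdF := lemA T K K' (fun x => H (U x)) hK'c hHUc hFTC ht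
  have hcong1 : conv k u =ᶠ[nhds t] conv K U := by
    filter_upwards [Icc_mem_nhds ht.1 ht.2] with t' ht'
    unfold conv
    apply intervalIntegral.integral_congr
    intro τ hτ
    rw [Set.uIcc_of_le ht'.1] at hτ
    have h2 : t' - τ ∈ Set.Icc (0:ℝ) T :=
      ⟨sub_nonneg.2 hτ.2, le_trans (by linarith [hτ.1]) ht'.2⟩
    have h3 : τ ∈ Set.Icc (0:ℝ) T := ⟨hτ.1, hτ.2.trans ht'.2⟩
    dsimp only
    rw [hKdef, hUdef]
    dsimp only
    rw [hceq _ h2, hceq _ h3]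
  have hcong2 : conv k (fun τ => H (u τ)) =ᶠ[nhds t] conv K (fun x => H (U x)) := by
    filter_upwards [Icc_mem_nhds ht.1 ht.2] with t' ht'
    unfold conv
    apply intervalIntegral.integral_congr
    intro τ hτ
    rw [Set.uIcc_of_le ht'.1] at hτ
    have h2 : t' - τ ∈ Set.Icc (0:ℝ) T :=
      ⟨sub_nonneg.2 hτ.2, le_trans (by linarith [hτ.1]) ht'.2⟩
    have h3 : τ ∈ Set.Icc (0:ℝ) T := ⟨hτ.1, hτ.2.trans ht'.2⟩
    dsimp only
    rw [hKdef, hUdef]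
    dsimp only
    rw [hceq _ h2, hceq _ h3]
  have hd1 : deriv (conv k u) t = K 0 * U t + ∫ x in (0:ℝ)..t, K' (t - x) * U x := by
    rw [hcong1.deriv_eq, hdU.deriv]
  have hd2 : deriv (conv k (fun τ => H (u τ))) t
      = K 0 * H (U t) + ∫ x in (0:ℝ)..t, K' (t - x) * H (U x) := by
    rw [hcong2.deriv_eq, hdF.deriv]
  have hA : (∫ x in (0:ℝ)..t, K' (t - x) * U x) = ∫ s in (0:ℝ)..t, K' s * U (t - s) := by
    have h := intervalIntegral.integral_comp_sub_left (a := 0) (b := t)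
      (fun s => K' s * U (t - s)) t
    simpa [sub_sub_cancel] using h
  have hB : (∫ x in (0:ℝ)..t, K' (t - x) * H (U x)) = ∫ s in (0:ℝ)..t, K' s * H (U (t - s)) := by
    have h := intervalIntegral.integral_comp_sub_left (a := 0) (b := t)
      (fun s => K' s * H (U (t - s))) t
    simpa [sub_sub_cancel] using h
  have hne : ∀ᵐ s : ℝ ∂volume, s ≠ t := by
    rw [MeasureTheory.ae_iff]
    simp only [not_not]
    rw [show {a : ℝ | a = t} = {t} from rfl]
    exact Real.volume_singleton
  have hJ1 : (∫ s in (0:ℝ)..t,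
        (H (u (t - s)) - H (u t) - v * (u (t - s) - u t)) * (-(deriv k s)))
      = ∫ s in (0:ℝ)..t,
        ((-(K' s * H (U (t - s))) + H (U t) * K' s)
          + (v * (K' s * U (t - s)) + -((v * U t) * K' s))) := by
    apply intervalIntegral.integral_congr_ae
    filter_upwards [hne] with s hs hmem
    rw [Set.uIoc_of_le ht.1.le] at hmem
    have hs1 : s ∈ Set.Ioo (0:ℝ) t := ⟨hmem.1, lt_of_le_of_ne hmem.2 hs⟩
    have hsT : s ∈ Set.Ioo (0:ℝ) T := ⟨hs1.1, hs1.2.trans ht.2⟩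
    have hsIcc : s ∈ Set.Icc (0:ℝ) T := ⟨hsT.1.le, hsT.2.le⟩
    have hts : t - s ∈ Set.Icc (0:ℝ) T := ⟨by linarith [hs1.2], by linarith [hsT.1, htIcc.2]⟩
    have e1 : deriv k s = K' s := by
      rw [hK'def]; dsimp only
      rw [hceq _ hsIcc, derivWithin_of_mem_nhds (Icc_mem_nhds hsT.1 hsT.2)]
    have e2 : u (t - s) = U (t - s) := by rw [hUdef]; dsimp only; rw [hceq _ hts]
    have e3 : u t = U t := by rw [hUdef]; dsimp only; rw [hceq _ htIcc]
    rw [e1, e2, e3]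
    ring
  have hI1a : IntervalIntegrable (fun s => -(K' s * H (U (t - s)))) volume 0 t :=
    ((hK'c.mul (hHUc.comp (continuous_const.sub continuous_id))).neg).intervalIntegrable _ _
  have hI1b : IntervalIntegrable (fun s => H (U t) * K' s) volume 0 t :=
    (continuous_const.mul hK'c).intervalIntegrable _ _
  have hI2a : IntervalIntegrable (fun s => v * (K' s * U (t - s))) volume 0 t :=
    (continuous_const.mul
      (hK'c.mul (hUc.comp (continuous_const.sub continuous_id)))).intervalIntegrable _ _
  have hI2b : IntervalIntegrable (fun s => -((v * U t) * K' s)) volume 0 t :=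
    ((continuous_const.mul hK'c).neg).intervalIntegrable _ _
  have hsplit : (∫ s in (0:ℝ)..t,
        ((-(K' s * H (U (t - s))) + H (U t) * K' s)
          + (v * (K' s * U (t - s)) + -((v * U t) * K' s))))
      = (-(∫ s in (0:ℝ)..t, K' s * H (U (t - s))) + H (U t) * (∫ s in (0:ℝ)..t, K' s))
        + (v * (∫ s in (0:ℝ)..t, K' s * U (t - s)) + -((v * U t) * (∫ s in (0:ℝ)..t, K' s))) := by
    rw [intervalIntegral.integral_add (hI1a.add hI1b) (hI2a.add hI2b),
      intervalIntegral.integral_add hI1a hI1b, intervalIntegral.integral_add hI2a hI2b,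
      intervalIntegral.integral_neg, intervalIntegral.integral_neg,
      intervalIntegral.integral_const_mul, intervalIntegral.integral_const_mul,
      intervalIntegral.integral_const_mul]
  have hK2 : (∫ s in (0:ℝ)..t, K' s) = K t - K 0 := by
    have := hFTC t htIcc; linarith
  have e3 : u t = U t := by rw [hUdef]; dsimp only; rw [hceq _ htIcc]
  have ekt : k t = K t := by rw [hKdef]; dsimp only; rw [hceq _ htIcc]
  rw [hd1, hd2, hJ1, hsplit, hA, hB, hK2, e3, ekt]
  ring
end

section
/- Let k ∈ H^1_1([0,T]) be nonnegative and nonincreasing, and let u ∈ L_2([0,T]) be such that k∗u is differentiable a.e. Then for a.a. t ∈ (0,T): u(t)_+ · d/dt(k∗u)(t) ≥ (1/2) d/dt (k ∗ (u_+)²)(t), where y_+ = max{y,0}. The analogous inequality holds with u_− = min{u,0} in place of u_+. -/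
open MeasureTheory

open Set Filter Metric Topology

/-- symmetric difference quotient tends to the derivative -/
private lemma symm_quot {F : ℝ → ℝ} {t d : ℝ} (hF : HasDerivAt F d t) :
    Tendsto (fun h => (F (t + h) - F (t - h)) / (2 * h)) (𝓝[>] (0:ℝ)) (𝓝 d) := by
  have hs := hasDerivAt_iff_tendsto_slope.1 hF
  have h1 : Tendsto (fun h : ℝ => t + h) (𝓝[>] (0:ℝ)) (𝓝[≠] t) := by
    apply tendsto_nhdsWithin_of_tendsto_nhds_of_eventually_within
    · have : Tendsto (fun h : ℝ => t + h) (𝓝 0) (𝓝 t) := by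
        simpa using (tendsto_const_nhds.add tendsto_id : Tendsto (fun h : ℝ => t + h) (𝓝 0) (𝓝 (t + 0)))
      exact this.mono_left nhdsWithin_le_nhds
    · filter_upwards [self_mem_nhdsWithin] with h (hh : h ∈ Ioi (0:ℝ))
      simp only [Set.mem_compl_iff, Set.mem_singleton_iff]
      intro hc; rw [Set.mem_Ioi] at hh; nlinarith [hc]
  have h2 : Tendsto (fun h : ℝ => t - h) (𝓝[>] (0:ℝ)) (𝓝[≠] t) := by
    apply tendsto_nhdsWithin_of_tendsto_nhds_of_eventually_within
    · have : Tendsto (fun h : ℝ => t - h) (𝓝 0) (𝓝 t) := by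
        simpa using (tendsto_const_nhds.sub tendsto_id : Tendsto (fun h : ℝ => t - h) (𝓝 0) (𝓝 (t - 0)))
      exact this.mono_left nhdsWithin_le_nhds
    · filter_upwards [self_mem_nhdsWithin] with h (hh : h ∈ Ioi (0:ℝ))
      simp only [Set.mem_compl_iff, Set.mem_singleton_iff]
      intro hc; rw [Set.mem_Ioi] at hh; nlinarith [hc]
  have T1 := hs.comp h1
  have T2 := hs.comp h2
  have T := (T1.add T2).div_const 2
  have hd : (d + d) / 2 = d := by ring
  rw [hd] at T
  refine T.congr' ?_
  filter_upwards [self_mem_nhdsWithin] with h (hh : h ∈ Ioi (0:ℝ))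
  rw [Set.mem_Ioi] at hh
  have hne : h ≠ 0 := ne_of_gt hh
  simp only [Function.comp_apply, slope_def_field]
  rw [show t + h - t = h by ring, show t - h - t = -h by ring, div_neg, ← neg_div]
  rw [← add_div, div_div, mul_comm h 2]
  congr 1
  ring

/-- one-dimensional Lebesgue differentiation, symmetric intervals -/
private lemma leb_pt {T : ℝ} (hT : 0 < T) {f : ℝ → ℝ} (hf : IntegrableOn f (Set.Ioc 0 T)) :
    ∀ᵐ t ∂(volume.restrict (Set.Ioo 0 T)),
      Tendsto (fun h => (2 * h)⁻¹ * ∫ τ in t - h..t + h, f τ) (𝓝[>] (0:ℝ)) (𝓝 (f t)) := by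
  set f₀ := (Set.Ioc (0:ℝ) T).indicator f with hf₀def
  have hf₀ : Integrable f₀ := (integrable_indicator_iff measurableSet_Ioc).2 hf
  have H := IsUnifLocDoublingMeasure.ae_tendsto_average (μ := (volume : Measure ℝ))
    hf₀.locallyIntegrable 1
  filter_upwards [ae_restrict_of_ae H, ae_restrict_mem measurableSet_Ioo] with t ht htm
  have key : Tendsto (fun h => ⨍ y in closedBall t h, f₀ y) (𝓝[>] (0:ℝ)) (𝓝 (f₀ t)) := by
    refine ht (fun _ => t) id tendsto_id ?_
    filter_upwards [self_mem_nhdsWithin] with h (hh : h ∈ Ioi (0:ℝ))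
    rw [Set.mem_Ioi] at hh
    simp only [id_eq, Metric.mem_closedBall, dist_self, one_mul]
    linarith
  have ht0 : f₀ t = f t := Set.indicator_of_mem (Set.mem_Ioc.mpr ⟨htm.1, htm.2.le⟩) f
  rw [ht0] at key
  refine key.congr' ?_
  have hmin : 0 < min t (T - t) := lt_min htm.1 (by linarith [htm.2])
  have hsmall : ∀ᶠ h in 𝓝[>] (0:ℝ), h < min t (T - t) := by
    filter_upwards [Ioo_mem_nhdsGT_of_mem ⟨le_refl (0:ℝ), hmin⟩] with h hh
    exact hh.2
  filter_upwards [self_mem_nhdsWithin, hsmall] with h hh hhs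
  rw [Set.mem_Ioi] at hh
  have hht : h < t := lt_of_lt_of_le hhs (min_le_left _ _)
  have hhT : t + h < T := by have := lt_of_lt_of_le hhs (min_le_right _ _); linarith
  have hsub : Set.Icc (t - h) (t + h) ⊆ Set.Ioc 0 T := by
    intro y hy
    rw [Set.mem_Icc] at hy
    exact Set.mem_Ioc.mpr ⟨by linarith [hy.1], by linarith [hy.2]⟩
  rw [setAverage_eq, Real.closedBall_eq_Icc, Real.volume_real_Icc_of_le (by linarith),
    show t + h - (t - h) = 2 * h by ring]
  have hind : ∫ y in Set.Icc (t - h) (t + h), f₀ y = ∫ y in Set.Icc (t - h) (t + h), f y := by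
    refine setIntegral_congr_fun measurableSet_Icc fun y hy => ?_
    exact Set.indicator_of_mem (hsub hy) f
  rw [hind, integral_Icc_eq_integral_Ioc, ← intervalIntegral.integral_of_le (by linarith)]
  simp [smul_eq_mul]

/-- kernel-times-integrable is interval integrable -/
private lemma kerII {T : ℝ} {k : ℝ → ℝ} (hknn : ∀ s ∈ Set.Icc (0:ℝ) T, 0 ≤ k s)
    (hkmono : AntitoneOn k (Set.Icc 0 T)) {f : ℝ → ℝ} (hf : IntegrableOn f (Set.Ioc 0 T))
    {x b c : ℝ} (hb : 0 ≤ b) (hbc : b ≤ c) (hcx : c ≤ x) (hxT : x ≤ T) :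
    IntervalIntegrable (fun τ => k (x - τ) * f τ) volume b c := by
  rw [intervalIntegrable_iff_integrableOn_Ioc_of_le hbc]
  have hmono : MonotoneOn (fun τ => k (x - τ)) (Set.Ioc b c) := by
    intro τ₁ h1 τ₂ h2 h12
    rw [Set.mem_Ioc] at h1 h2
    exact hkmono (Set.mem_Icc.mpr ⟨by linarith [h2.2], by linarith [h2.1]⟩)
      (Set.mem_Icc.mpr ⟨by linarith [h1.2], by linarith [h1.1]⟩) (by linarith)
  have hmeas : AEMeasurable (fun τ => k (x - τ)) (volume.restrict (Set.Ioc b c)) :=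
    aemeasurable_restrict_of_monotoneOn measurableSet_Ioc hmono
  have hfint : IntegrableOn f (Set.Ioc b c) :=
    hf.mono_set (Set.Ioc_subset_Ioc hb (le_trans hcx hxT))
  refine hfint.bdd_mul (c := k 0) hmeas.aestronglyMeasurable ?_
  rw [ae_restrict_iff' measurableSet_Ioc]
  refine Eventually.of_forall fun τ hτ => ?_
  rw [Set.mem_Ioc] at hτ
  have h1 : x - τ ∈ Set.Icc (0:ℝ) T := Set.mem_Icc.mpr ⟨by linarith [hτ.2], by linarith [hτ.1]⟩
  have h2 : 0 ≤ k (x - τ) := hknn _ h1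
  have h3 : k (x - τ) ≤ k 0 :=
    hkmono (Set.mem_Icc.mpr ⟨le_refl 0, by linarith⟩) h1 (by linarith [hτ.2, hτ.1])
  rw [Real.norm_eq_abs, abs_of_nonneg h2]
  exact h3

private lemma aux_key {T : ℝ} (hT : 0 < T) {k u v : ℝ → ℝ}
    (hknn : ∀ s ∈ Set.Icc (0:ℝ) T, 0 ≤ k s)
    (hkmono : AntitoneOn k (Set.Icc 0 T))
    (hu : IntegrableOn u (Set.Ioc 0 T))
    (hv2 : IntegrableOn (fun τ => v τ ^ 2) (Set.Ioc 0 T))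
    (hineq : ∀ s τ : ℝ, v s * u τ - (1/2) * v τ ^ 2 ≤ (1/2) * v s ^ 2)
    (hvu : ∀ s : ℝ, v s * u s = v s ^ 2)
    (hd1 : ∀ᵐ t ∂(volume.restrict (Set.Ioo 0 T)), DifferentiableAt ℝ (conv k u) t)
    (hd2 : ∀ᵐ t ∂(volume.restrict (Set.Ioo 0 T)),
      DifferentiableAt ℝ (conv k (fun τ => v τ ^ 2)) t) :
    ∀ᵐ t ∂(volume.restrict (Set.Ioo 0 T)),
      v t * deriv (conv k u) t ≥ (1/2) * deriv (conv k (fun τ => v τ ^ 2)) t := by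
  -- kernel-only interval integrability
  have km : ∀ x b c : ℝ, 0 ≤ b → b ≤ c → c ≤ x → x ≤ T →
      IntervalIntegrable (fun τ => k (x - τ)) volume b c := by
    intro x b c hb hbc hcx hxT
    apply MonotoneOn.intervalIntegrable
    rw [Set.uIcc_of_le hbc]
    intro τ₁ h1 τ₂ h2 h12
    rw [Set.mem_Icc] at h1 h2
    exact hkmono (Set.mem_Icc.mpr ⟨by linarith [h2.2], by linarith [h2.1]⟩)
      (Set.mem_Icc.mpr ⟨by linarith [h1.2], by linarith [h1.1]⟩) (by linarith)
  have kk : ∀ b c : ℝ, 0 ≤ b → b ≤ c → c ≤ T → IntervalIntegrable k volume b c := by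
    intro b c hb hbc hcT
    apply AntitoneOn.intervalIntegrable
    rw [Set.uIcc_of_le hbc]
    intro τ₁ h1 τ₂ h2 h12
    rw [Set.mem_Icc] at h1 h2
    exact hkmono (Set.mem_Icc.mpr ⟨by linarith, by linarith⟩)
      (Set.mem_Icc.mpr ⟨by linarith, by linarith⟩) h12
  filter_upwards [hd1, hd2, leb_pt hT hu, leb_pt hT hv2, ae_restrict_mem measurableSet_Ioo]
    with t ht1 ht2 hLu hLv htm
  rw [Set.mem_Ioo] at htm
  obtain ⟨ht0, htT⟩ := htm
  set a := v t with ha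
  set c := (1/2) * v t ^ 2 with hc
  set w : ℝ → ℝ := fun τ => a * u τ - (1/2) * v τ ^ 2 with hwdef
  have hwle : ∀ τ, w τ ≤ c := fun τ => hineq t τ
  have hwt : w t = c := by
    simp only [hwdef, hc, ha]
    have := hvu t
    nlinarith [hvu t]
  have hcnn : 0 ≤ c := by positivity
  have hw_int : IntegrableOn w (Set.Ioc 0 T) := (hu.const_mul a).sub (hv2.const_mul (1/2))
  -- linearity of the convolution
  have hconv : ∀ x : ℝ, 0 < x → x ≤ T →
      (∫ τ in (0:ℝ)..x, k (x - τ) * w τ)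
        = a * conv k u x - (1/2) * conv k (fun τ => v τ ^ 2) x := by
    intro x hx0 hxT
    have I1 : IntervalIntegrable (fun τ => k (x - τ) * u τ) volume 0 x :=
      kerII hknn hkmono hu (le_refl 0) hx0.le (le_refl x) hxT
    have I2 : IntervalIntegrable (fun τ => k (x - τ) * v τ ^ 2) volume 0 x :=
      kerII hknn hkmono hv2 (le_refl 0) hx0.le (le_refl x) hxT
    unfold conv
    rw [← intervalIntegral.integral_const_mul, ← intervalIntegral.integral_const_mul,
      ← intervalIntegral.integral_sub (I1.const_mul a) (I2.const_mul (1/2))]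
    apply intervalIntegral.integral_congr
    intro τ _
    simp only [hwdef]
    ring
  -- main estimate
  have hmain : ∀ h : ℝ, 0 < h → h < min t (T - t) →
      (∫ τ in (0:ℝ)..(t+h), k (t + h - τ) * w τ)
          - (∫ τ in (0:ℝ)..(t-h), k (t - h - τ) * w τ)
        ≥ -(k 0) * ∫ τ in (t-h)..(t+h), (c - w τ) := by
    intro h h0 hlt
    have hht : h < t := lt_of_lt_of_le hlt (min_le_left _ _)
    have hhT : t + h < T := by
      have := lt_of_lt_of_le hlt (min_le_right _ _); linarith
    have hp0 : 0 < t - h := by linarith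
    have hpq : t - h ≤ t + h := by linarith
    have hqT : t + h ≤ T := hhT.le
    have hpT : t - h ≤ T := by linarith
    have Iw_q0 : IntervalIntegrable (fun τ => k (t + h - τ) * w τ) volume 0 (t-h) :=
      kerII hknn hkmono hw_int (le_refl 0) hp0.le (by linarith) hqT
    have Iw_mid : IntervalIntegrable (fun τ => k (t + h - τ) * w τ) volume (t-h) (t+h) :=
      kerII hknn hkmono hw_int hp0.le hpq (le_refl _) hqT
    have Iw_p0 : IntervalIntegrable (fun τ => k (t - h - τ) * w τ) volume 0 (t-h) :=
      kerII hknn hkmono hw_int (le_refl 0) hp0.le (le_refl _) hpT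
    have Iw_plain : IntervalIntegrable w volume (t-h) (t+h) :=
      (intervalIntegrable_iff_integrableOn_Ioc_of_le hpq).2
        (hw_int.mono_set (Set.Ioc_subset_Ioc hp0.le hqT))
    have hsplit : (∫ τ in (0:ℝ)..(t+h), k (t + h - τ) * w τ)
        = (∫ τ in (0:ℝ)..(t-h), k (t + h - τ) * w τ)
          + ∫ τ in (t-h)..(t+h), k (t + h - τ) * w τ :=
      (intervalIntegral.integral_add_adjacent_intervals Iw_q0 Iw_mid).symm
    have hdiff : (∫ τ in (0:ℝ)..(t-h), k (t + h - τ) * w τ)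
          - (∫ τ in (0:ℝ)..(t-h), k (t - h - τ) * w τ)
        = ∫ τ in (0:ℝ)..(t-h), (k (t + h - τ) - k (t - h - τ)) * w τ := by
      rw [← intervalIntegral.integral_sub Iw_q0 Iw_p0]
      apply intervalIntegral.integral_congr
      intro τ _; ring
    have hmid : (∫ τ in (t-h)..(t+h), k (t + h - τ) * w τ)
        ≥ ∫ τ in (t-h)..(t+h), (c * k (t + h - τ) - k 0 * (c - w τ)) := by
      apply intervalIntegral.integral_mono_on hpq
        (((km (t+h) (t-h) (t+h) hp0.le hpq (le_refl _) hqT).const_mul c).sub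
          ((intervalIntegrable_const.sub Iw_plain).const_mul (k 0)))
        Iw_mid
      intro τ hτ
      rw [Set.mem_Icc] at hτ
      have harg : t + h - τ ∈ Set.Icc (0:ℝ) T :=
        Set.mem_Icc.mpr ⟨by linarith [hτ.2], by linarith [hτ.1, hp0]⟩
      have h1 := hknn _ harg
      have h2 : k (t + h - τ) ≤ k 0 :=
        hkmono (Set.mem_Icc.mpr ⟨le_refl 0, by linarith⟩) harg (by linarith [hτ.2])
      have h3 := hwle τ
      nlinarith
    have htail : (∫ τ in (0:ℝ)..(t-h), (k (t + h - τ) - k (t - h - τ)) * w τ)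
        ≥ ∫ τ in (0:ℝ)..(t-h), (k (t + h - τ) - k (t - h - τ)) * c := by
      apply intervalIntegral.integral_mono_on hp0.le
        (((km (t+h) 0 (t-h) (le_refl 0) hp0.le (by linarith) hqT).sub
          (km (t-h) 0 (t-h) (le_refl 0) hp0.le (le_refl _) hpT)).mul_const c)
        (by
          have : (fun τ => (k (t + h - τ) - k (t - h - τ)) * w τ)
              = fun τ => k (t + h - τ) * w τ - k (t - h - τ) * w τ := funext fun τ => by ring
          rw [this]; exact Iw_q0.sub Iw_p0)
      intro τ hτ
      rw [Set.mem_Icc] at hτ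
      have hm1 : t - h - τ ∈ Set.Icc (0:ℝ) T :=
        Set.mem_Icc.mpr ⟨by linarith [hτ.2], by linarith [hτ.1]⟩
      have hm2 : t + h - τ ∈ Set.Icc (0:ℝ) T :=
        Set.mem_Icc.mpr ⟨by linarith [hτ.2], by linarith [hτ.1]⟩
      have h1 : k (t + h - τ) ≤ k (t - h - τ) := hkmono hm1 hm2 (by linarith)
      have h3 := hwle τ
      nlinarith
    have e3 : ∀ x : ℝ, 0 ≤ x → x ≤ T →
        (∫ τ in (0:ℝ)..x, c * k (x - τ)) = c * ∫ s in (0:ℝ)..x, k s := by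
      intro x hx hxT
      rw [intervalIntegral.integral_const_mul]
      congr 1
      have := intervalIntegral.integral_comp_sub_left (a := (0:ℝ)) (b := x) k x
      simpa using this
    have e1 : (∫ τ in (0:ℝ)..(t-h), (k (t + h - τ) - k (t - h - τ)) * c)
        = (∫ τ in (0:ℝ)..(t-h), c * k (t + h - τ))
          - ∫ τ in (0:ℝ)..(t-h), c * k (t - h - τ) := by
      rw [← intervalIntegral.integral_sub
        ((km (t+h) 0 (t-h) (le_refl 0) hp0.le (by linarith) hqT).const_mul c)
        ((km (t-h) 0 (t-h) (le_refl 0) hp0.le (le_refl _) hpT).const_mul c)]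
      apply intervalIntegral.integral_congr
      intro τ _; ring
    have e2 : (∫ τ in (0:ℝ)..(t-h), c * k (t + h - τ))
          + (∫ τ in (t-h)..(t+h), c * k (t + h - τ))
        = ∫ τ in (0:ℝ)..(t+h), c * k (t + h - τ) :=
      intervalIntegral.integral_add_adjacent_intervals
        ((km (t+h) 0 (t-h) (le_refl 0) hp0.le (by linarith) hqT).const_mul c)
        ((km (t+h) (t-h) (t+h) hp0.le hpq (le_refl _) hqT).const_mul c)
    have e4 : (∫ s in (0:ℝ)..(t-h), k s) + (∫ s in (t-h)..(t+h), k s)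
        = ∫ s in (0:ℝ)..(t+h), k s :=
      intervalIntegral.integral_add_adjacent_intervals
        (kk 0 (t-h) (le_refl 0) hp0.le hpT) (kk (t-h) (t+h) hp0.le hpq hqT)
    have hknonneg : 0 ≤ ∫ s in (t-h)..(t+h), k s := by
      apply intervalIntegral.integral_nonneg hpq
      intro s hs
      rw [Set.mem_Icc] at hs
      exact hknn s (Set.mem_Icc.mpr ⟨by linarith [hs.1], by linarith [hs.2]⟩)
    have hmid2 : (∫ τ in (t-h)..(t+h), (c * k (t + h - τ) - k 0 * (c - w τ)))
        = (∫ τ in (t-h)..(t+h), c * k (t + h - τ))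
          - k 0 * ∫ τ in (t-h)..(t+h), (c - w τ) := by
      rw [intervalIntegral.integral_sub
        ((km (t+h) (t-h) (t+h) hp0.le hpq (le_refl _) hqT).const_mul c)
        ((intervalIntegrable_const.sub Iw_plain).const_mul (k 0)),
        intervalIntegral.integral_const_mul]
      rw [intervalIntegral.integral_const_mul]
    have eq3q := e3 (t+h) (by linarith) hqT
    have eq3p := e3 (t-h) hp0.le hpT
    have hcpos : 0 ≤ c * ∫ s in (t-h)..(t+h), k s := mul_nonneg hcnn hknonneg
    have e4c : c * (∫ s in (0:ℝ)..(t-h), k s) + c * (∫ s in (t-h)..(t+h), k s)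
        = c * ∫ s in (0:ℝ)..(t+h), k s := by rw [← mul_add, e4]
    rw [ge_iff_le, ← sub_nonneg]
    rw [hsplit]
    linarith [hmid, htail, e1, e2, e4c, hmid2, eq3q, eq3p, hcpos, hdiff]
  -- small h filter
  have hmin : 0 < min t (T - t) := lt_min ht0 (by linarith)
  have hsm : ∀ᶠ h in 𝓝[>] (0:ℝ), 0 < h ∧ h < min t (T - t) := by
    filter_upwards [Ioo_mem_nhdsGT_of_mem ⟨le_refl (0:ℝ), hmin⟩] with h hh
    exact ⟨hh.1, hh.2⟩
  -- the averaged remainder tends to 0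
  have base : Tendsto (fun h => (2*h)⁻¹ * ∫ τ in t-h..t+h, (c - w τ)) (𝓝[>] (0:ℝ)) (𝓝 0) := by
    have comb : Tendsto (fun h => c - a * ((2*h)⁻¹ * ∫ τ in t-h..t+h, u τ)
        + (1/2) * ((2*h)⁻¹ * ∫ τ in t-h..t+h, v τ ^ 2)) (𝓝[>] (0:ℝ))
        (𝓝 (c - a * u t + (1/2) * a ^ 2)) :=
      (tendsto_const_nhds.sub (hLu.const_mul a)).add (hLv.const_mul (1/2))
    have hzero : c - a * u t + (1/2) * a ^ 2 = 0 := by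
      have := hvu t
      simp only [hc, ha] at *
      nlinarith [hvu t]
    rw [hzero] at comb
    refine Tendsto.congr' ?_ comb
    filter_upwards [hsm] with h hh
    obtain ⟨h0, hlt⟩ := hh
    have hht : h < t := lt_of_lt_of_le hlt (min_le_left _ _)
    have hhT : t + h ≤ T := by
      have := lt_of_lt_of_le hlt (min_le_right _ _); linarith
    have hpq : t - h ≤ t + h := by linarith
    have hsub : Set.Ioc (t-h) (t+h) ⊆ Set.Ioc 0 T :=
      Set.Ioc_subset_Ioc (by linarith) hhT
    have Iu : IntervalIntegrable u volume (t-h) (t+h) :=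
      (intervalIntegrable_iff_integrableOn_Ioc_of_le hpq).2 (hu.mono_set hsub)
    have Iv : IntervalIntegrable (fun τ => v τ ^ 2) volume (t-h) (t+h) :=
      (intervalIntegrable_iff_integrableOn_Ioc_of_le hpq).2 (hv2.mono_set hsub)
    have hint : ∫ τ in t-h..t+h, (c - w τ)
        = c * (2*h) - (a * ∫ τ in t-h..t+h, u τ)
          + (1/2) * ∫ τ in t-h..t+h, v τ ^ 2 := by
      have expand : (fun τ => c - w τ)
          = fun τ => c - (a * u τ - (1/2) * v τ ^ 2) := rfl
      rw [expand, intervalIntegral.integral_sub intervalIntegrable_const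
        ((Iu.const_mul a).sub (Iv.const_mul (1/2))),
        intervalIntegral.integral_sub (Iu.const_mul a) (Iv.const_mul (1/2)),
        intervalIntegral.integral_const_mul, intervalIntegral.integral_const_mul,
        intervalIntegral.integral_const]
      have : t + h - (t - h) = 2 * h := by ring
      rw [this]
      simp [smul_eq_mul]
      ring
    rw [hint]
    have h2h : (2*h) ≠ 0 := by positivity
    field_simp
  have hPsi : Tendsto (fun h => -(k 0) * ((2*h)⁻¹ * ∫ τ in t-h..t+h, (c - w τ)))
      (𝓝[>] (0:ℝ)) (𝓝 0) := by
    have := base.const_mul (-(k 0))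
    simpa using this
  set F₁ := conv k u with hF₁
  set F₂ := conv k (fun τ => v τ ^ 2) with hF₂
  have hq1 := symm_quot ht1.hasDerivAt
  have hq2 := symm_quot ht2.hasDerivAt
  have hPhi : Tendsto (fun h => a * ((F₁ (t+h) - F₁ (t-h))/(2*h))
      - (1/2) * ((F₂ (t+h) - F₂ (t-h))/(2*h))) (𝓝[>] (0:ℝ))
      (𝓝 (a * deriv F₁ t - (1/2) * deriv F₂ t)) :=
    (hq1.const_mul a).sub (hq2.const_mul (1/2))
  have hev : ∀ᶠ h in 𝓝[>] (0:ℝ),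
      -(k 0) * ((2*h)⁻¹ * ∫ τ in t-h..t+h, (c - w τ))
        ≤ a * ((F₁ (t+h) - F₁ (t-h))/(2*h)) - (1/2) * ((F₂ (t+h) - F₂ (t-h))/(2*h)) := by
    filter_upwards [hsm] with h hh
    obtain ⟨h0, hlt⟩ := hh
    have hht : h < t := lt_of_lt_of_le hlt (min_le_left _ _)
    have hhT : t + h < T := by
      have := lt_of_lt_of_le hlt (min_le_right _ _); linarith
    have key := hmain h h0 hlt
    rw [hconv (t+h) (by linarith) hhT.le, hconv (t-h) (by linarith) (by linarith)] at key
    have h2h : (0:ℝ) < 2 * h := by linarith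
    have hmul := mul_le_mul_of_nonneg_right key (le_of_lt (inv_pos.mpr h2h))
    calc -(k 0) * ((2*h)⁻¹ * ∫ τ in t-h..t+h, (c - w τ))
        = (-(k 0) * ∫ τ in t-h..t+h, (c - w τ)) * (2*h)⁻¹ := by ring
      _ ≤ ((a * F₁ (t+h) - 1/2 * F₂ (t+h)) - (a * F₁ (t-h) - 1/2 * F₂ (t-h))) * (2*h)⁻¹ := hmul
      _ = a * ((F₁ (t+h) - F₁ (t-h))/(2*h)) - (1/2) * ((F₂ (t+h) - F₂ (t-h))/(2*h)) := by
          rw [div_eq_mul_inv, div_eq_mul_inv]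
          ring
  have final := le_of_tendsto_of_tendsto hPsi hPhi hev
  rw [ge_iff_le]
  linarith [final]


theorem stmt_4 (T : ℝ) (hT : 0 < T) (k u : ℝ → ℝ)
    -- k ∈ H^1_1([0,T]): absolutely continuous with integrable derivative
    (hkd : DifferentiableOn ℝ k (Set.Ioo 0 T))
    (hkint : IntegrableOn (deriv k) (Set.Ioo 0 T))
    -- k nonnegative and nonincreasing
    (hknn : ∀ t ∈ Set.Icc (0:ℝ) T, 0 ≤ k t)
    (hkmono : AntitoneOn k (Set.Icc 0 T))
    -- u ∈ L_2([0,T])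
    (hu : MemLp u 2 (volume.restrict (Set.Ioc 0 T)))
    -- the convolutions are differentiable a.e.
    (hd1 : ∀ᵐ t ∂(volume.restrict (Set.Ioo 0 T)), DifferentiableAt ℝ (conv k u) t)
    (hd2 : ∀ᵐ t ∂(volume.restrict (Set.Ioo 0 T)),
      DifferentiableAt ℝ (conv k (fun τ => (max (u τ) 0) ^ 2)) t)
    (hd3 : ∀ᵐ t ∂(volume.restrict (Set.Ioo 0 T)),
      DifferentiableAt ℝ (conv k (fun τ => (min (u τ) 0) ^ 2)) t) :
    (∀ᵐ t ∂(volume.restrict (Set.Ioo 0 T)),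
        max (u t) 0 * deriv (conv k u) t
          ≥ (1 / 2) * deriv (conv k (fun τ => (max (u τ) 0) ^ 2)) t) ∧
      (∀ᵐ t ∂(volume.restrict (Set.Ioo 0 T)),
        min (u t) 0 * deriv (conv k u) t
          ≥ (1 / 2) * deriv (conv k (fun τ => (min (u τ) 0) ^ 2)) t) := by
  
  have hfin : IsFiniteMeasure (volume.restrict (Set.Ioc 0 T)) := by
    constructor
    rw [Measure.restrict_apply_univ, Real.volume_Ioc]
    exact ENNReal.ofReal_lt_top
  have hu_int : IntegrableOn u (Set.Ioc 0 T) := hu.integrable one_le_two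
  have hu2 : Integrable (fun τ => u τ ^ 2) (volume.restrict (Set.Ioc 0 T)) := hu.integrable_sq
  constructor
  · refine aux_key (v := fun s => max (u s) 0) hT hknn hkmono hu_int ?_ ?_ ?_ hd1 hd2
    · refine hu2.mono' ?_ ?_
      · exact ((hu.aestronglyMeasurable.aemeasurable.max aemeasurable_const).pow_const
          2).aestronglyMeasurable
      · refine Eventually.of_forall fun τ => ?_
        show ‖max (u τ) 0 ^ 2‖ ≤ u τ ^ 2
        rw [Real.norm_eq_abs]
        rcases le_or_gt (u τ) 0 with hle | hlt
        · have he : max (u τ) 0 = 0 := max_eq_right hle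
          rw [he]; simp; positivity
        · have he : max (u τ) 0 = u τ := max_eq_left hlt.le
          rw [he, abs_of_nonneg (sq_nonneg _)]
    · intro s τ
      show max (u s) 0 * u τ - 1/2 * max (u τ) 0 ^ 2 ≤ 1/2 * max (u s) 0 ^ 2
      have h1 : max (u s) 0 * u τ ≤ max (u s) 0 * max (u τ) 0 :=
        mul_le_mul_of_nonneg_left (le_max_left _ _) (le_max_right _ _)
      nlinarith [sq_nonneg (max (u s) 0 - max (u τ) 0)]
    · intro s
      show max (u s) 0 * u s = max (u s) 0 ^ 2
      rcases le_or_gt (u s) 0 with hle | hlt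
      · have he : max (u s) 0 = 0 := max_eq_right hle
        rw [he]; ring
      · have he : max (u s) 0 = u s := max_eq_left hlt.le
        rw [he]; ring
  · refine aux_key (v := fun s => min (u s) 0) hT hknn hkmono hu_int ?_ ?_ ?_ hd1 hd3
    · refine hu2.mono' ?_ ?_
      · exact ((hu.aestronglyMeasurable.aemeasurable.min aemeasurable_const).pow_const
          2).aestronglyMeasurable
      · refine Eventually.of_forall fun τ => ?_
        show ‖min (u τ) 0 ^ 2‖ ≤ u τ ^ 2
        rw [Real.norm_eq_abs]
        rcases le_or_gt (u τ) 0 with hle | hlt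
        · have he : min (u τ) 0 = u τ := min_eq_left hle
          rw [he, abs_of_nonneg (sq_nonneg _)]
        · have he : min (u τ) 0 = 0 := min_eq_right hlt.le
          rw [he]; simp; positivity
    · intro s τ
      show min (u s) 0 * u τ - 1/2 * min (u τ) 0 ^ 2 ≤ 1/2 * min (u s) 0 ^ 2
      have h1 : min (u s) 0 * u τ ≤ min (u s) 0 * min (u τ) 0 :=
        mul_le_mul_of_nonpos_left (min_le_left _ _) (min_le_right _ _)
      nlinarith [sq_nonneg (min (u s) 0 - min (u τ) 0)]
    · intro s
      show min (u s) 0 * u s = min (u s) 0 ^ 2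
      rcases le_or_gt (u s) 0 with hle | hlt
      · have he : min (u s) 0 = u s := min_eq_left hle
        rw [he]; ring
      · have he : min (u s) 0 = 0 := min_eq_right hlt.le
        rw [he]; ring
end

section
/- Let α ∈ (0,1) and μ ≥ 0, and define k(t) = g_{1−α}(t) e^{−μt} and l(t) = g_α(t) e^{−μt} + μ ∫_0^t g_α(τ) e^{−μτ} dτ for t > 0, where g_β(t) = t^{β−1}/Γ(β). Then (k ∗ l)(t) = 1 for all t > 0, where ∗ is convolution on the half-line. -/
open MeasureTheory Real Set

noncomputable def rlKernel (β t : ℝ) : ℝ := t ^ (β - 1) / Real.Gamma β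

namespace Stmt14Aux


lemma contOn_ker (β μ : ℝ) {s : Set ℝ} (h : ∀ x ∈ s, x ≠ 0) :
    ContinuousOn (fun τ : ℝ => rlKernel β τ * Real.exp (-μ * τ)) s := by
  unfold rlKernel
  exact ((continuousOn_id.rpow_const fun x hx => Or.inl (h x hx)).div_const _).mul
    (Continuous.continuousOn (by continuity))

lemma measurable_ker (β μ : ℝ) : Measurable (fun t : ℝ => rlKernel β t * Real.exp (-μ * t)) := by
  unfold rlKernel
  exact (((measurable_of_continuousOn_compl_singleton 0
      (continuousOn_id.rpow_const fun _ hx => Or.inl hx)).div_const _)).mul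
    (Real.measurable_exp.comp (measurable_const.mul measurable_id))

lemma integrable_indicator_of_le {t : ℝ} {S : Set (ℝ × ℝ)} (hS : MeasurableSet S)
    (hsub : S ⊆ Ioo 0 t ×ˢ Ioo 0 t) {f : ℝ × ℝ → ℝ} (hfm : Measurable f)
    {a b : ℝ → ℝ} (hbound : ∀ z ∈ S, ‖f z‖ ≤ ‖a z.1‖ * ‖b z.2‖)
    (ha : IntegrableOn a (Ioo 0 t)) (hb : IntegrableOn b (Ioo 0 t)) :
    Integrable (S.indicator f) (volume : Measure (ℝ × ℝ)) := by
  refine Integrable.mono' (g := fun z : ℝ × ℝ =>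
      ((Ioo (0:ℝ) t).indicator (fun u => ‖a u‖) z.1) *
      ((Ioo (0:ℝ) t).indicator (fun u => ‖b u‖) z.2)) ?_ ?_ ?_
  · rw [Measure.volume_eq_prod]
    exact Integrable.mul_prod ((integrable_indicator_iff measurableSet_Ioo).2 ha.norm)
      ((integrable_indicator_iff measurableSet_Ioo).2 hb.norm)
  · exact (hfm.indicator hS).aestronglyMeasurable
  · refine Filter.Eventually.of_forall fun z => ?_
    by_cases hz : z ∈ S
    · rw [indicator_of_mem hz]
      have h1 := (hsub hz).1
      have h2 := (hsub hz).2
      rw [indicator_of_mem h1, indicator_of_mem h2]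
      exact hbound z hz
    · rw [indicator_of_notMem hz]
      simp only [norm_zero]
      exact mul_nonneg (indicator_nonneg (fun _ _ => norm_nonneg _) _)
        (indicator_nonneg (fun _ _ => norm_nonneg _) _)



lemma measurable_rpow_const (c : ℝ) : Measurable (fun x : ℝ => x ^ c) :=
  measurable_of_continuousOn_compl_singleton 0
    (continuousOn_id.rpow_const fun _ hx => Or.inl hx)

lemma measurable_ker2 (β μ : ℝ) : Measurable (fun t : ℝ => rlKernel β t * Real.exp (-μ * t)) := by
  unfold rlKernel
  exact ((measurable_rpow_const _).div_const _).mul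
    (Real.measurable_exp.comp (measurable_const.mul measurable_id))

lemma intervalIntegrable_ker {β : ℝ} (hβ : 0 < β) (μ a b : ℝ) :
    IntervalIntegrable (fun τ : ℝ => rlKernel β τ * Real.exp (-μ * τ)) volume a b := by
  have h : (fun τ : ℝ => rlKernel β τ * Real.exp (-μ * τ))
      = fun τ : ℝ => τ ^ (β - 1) * (Real.exp (-μ * τ) / Real.Gamma β) := by
    funext τ; unfold rlKernel; ring
  rw [h]
  exact (intervalIntegral.intervalIntegrable_rpow' (by linarith)).mul_continuousOn
    (Continuous.continuousOn (by continuity))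

lemma real_beta {α : ℝ} (h0 : 0 < α) (h1 : α < 1) {x : ℝ} (hx : 0 < x) :
    (∫ τ in (0:ℝ)..x, τ ^ (α - 1) * (x - τ) ^ (-α))
      = Real.Gamma α * Real.Gamma (1 - α) := by
  have hre1 : 0 < Complex.re (α : ℂ) := by simpa using h0
  have hre2 : 0 < Complex.re ((1:ℂ) - α) := by
    simp only [Complex.sub_re, Complex.one_re, Complex.ofReal_re]; linarith
  have hB := Complex.Gamma_mul_Gamma_eq_betaIntegral hre1 hre2
  have hsum : (α : ℂ) + (1 - α) = 1 := by ring
  rw [hsum, Complex.Gamma_one, one_mul] at hB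
  have hscaled := Complex.betaIntegral_scaled (α : ℂ) (1 - α) hx
  have hexp : (α : ℂ) + (1 - α) - 1 = 0 := by ring
  rw [hexp, Complex.cpow_zero, one_mul] at hscaled
  have hcast : (((∫ τ in (0:ℝ)..x, τ ^ (α - 1) * (x - τ) ^ (-α)) : ℝ) : ℂ)
      = ∫ τ in (0:ℝ)..x, (τ:ℂ) ^ ((α:ℂ) - 1) * ((x:ℂ) - τ) ^ ((1:ℂ) - α - 1) := by
    rw [← intervalIntegral.integral_ofReal]
    refine intervalIntegral.integral_congr fun τ hτ => ?_
    rw [uIcc_of_le hx.le] at hτ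
    have h1' : (0:ℝ) ≤ x - τ := by linarith [hτ.2]
    rw [Complex.ofReal_mul, Complex.ofReal_cpow hτ.1, Complex.ofReal_cpow h1']
    have e1 : ((α - 1 : ℝ) : ℂ) = (α:ℂ) - 1 := by push_cast; ring
    have e2 : ((-α : ℝ) : ℂ) = (1:ℂ) - α - 1 := by push_cast; ring
    have e3 : ((x - τ : ℝ) : ℂ) = (x:ℂ) - τ := by push_cast; ring
    rw [e1, e2, e3]
  have hfin : (((∫ τ in (0:ℝ)..x, τ ^ (α - 1) * (x - τ) ^ (-α)) : ℝ) : ℂ)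
      = ((Real.Gamma α * Real.Gamma (1 - α) : ℝ) : ℂ) := by
    rw [hcast, hscaled, ← hB]
    rw [show ((1:ℂ) - α) = ((1 - α : ℝ) : ℂ) from by push_cast; ring]
    rw [Complex.Gamma_ofReal, Complex.Gamma_ofReal]
    push_cast
    ring
  exact_mod_cast hfin

lemma conv_exp {α μ : ℝ} (h0 : 0 < α) (h1 : α < 1) {x : ℝ} (hx : 0 < x) :
    (∫ τ in (0:ℝ)..x, (rlKernel α τ * Real.exp (-μ * τ)) *
        (rlKernel (1-α) (x - τ) * Real.exp (-μ * (x - τ))))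
      = Real.exp (-μ * x) := by
  have hΓα := Real.Gamma_pos_of_pos h0
  have hΓ1α := Real.Gamma_pos_of_pos (by linarith : (0:ℝ) < 1 - α)
  have hpt : ∀ τ : ℝ, (rlKernel α τ * Real.exp (-μ * τ)) *
      (rlKernel (1-α) (x - τ) * Real.exp (-μ * (x - τ)))
      = (τ ^ (α - 1) * (x - τ) ^ (-α)) *
        (Real.exp (-μ * x) / (Real.Gamma α * Real.Gamma (1 - α))) := by
    intro τ
    have he : Real.exp (-μ * τ) * Real.exp (-μ * (x - τ)) = Real.exp (-μ * x) := by
      rw [← Real.exp_add]; ring_nf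
    unfold rlKernel
    rw [show (1 - α) - 1 = -α from by ring]
    calc (τ ^ (α - 1) / Real.Gamma α * Real.exp (-μ * τ)) *
          ((x - τ) ^ (-α) / Real.Gamma (1 - α) * Real.exp (-μ * (x - τ)))
        = (τ ^ (α - 1) * (x - τ) ^ (-α)) *
          ((Real.exp (-μ * τ) * Real.exp (-μ * (x - τ))) /
            (Real.Gamma α * Real.Gamma (1 - α))) := by ring
      _ = _ := by rw [he]
  simp_rw [hpt]
  rw [intervalIntegral.integral_mul_const, real_beta h0 h1 hx]
  field_simp



lemma tri_swap {t : ℝ} (ht : 0 < t) (F : ℝ → ℝ → ℝ)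
    (hF : Integrable (({z : ℝ × ℝ | 0 < z.2 ∧ z.2 < z.1 ∧ z.1 < t}).indicator
        (fun z => F z.1 z.2)) (volume : Measure (ℝ × ℝ))) :
    (∫ τ in (0:ℝ)..t, ∫ s in (0:ℝ)..τ, F τ s) = ∫ s in (0:ℝ)..t, ∫ τ in s..t, F τ s := by
  have hGvol : Integrable (Function.uncurry (fun τ s : ℝ =>
      ({z : ℝ × ℝ | 0 < z.2 ∧ z.2 < z.1 ∧ z.1 < t}).indicator (fun z => F z.1 z.2) (τ, s)))
      ((volume : Measure ℝ).prod volume) := by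
    rw [← Measure.volume_eq_prod]
    exact hF
  have L1 : (∫ τ in (0:ℝ)..t, ∫ s in (0:ℝ)..τ, F τ s)
      = ∫ τ : ℝ, ∫ s : ℝ,
        ({z : ℝ × ℝ | 0 < z.2 ∧ z.2 < z.1 ∧ z.1 < t}).indicator (fun z => F z.1 z.2) (τ, s) := by
    rw [intervalIntegral.integral_of_le ht.le, integral_Ioc_eq_integral_Ioo,
      ← integral_indicator measurableSet_Ioo]
    congr 1
    funext τ
    by_cases hτ : τ ∈ Ioo (0:ℝ) t
    · rw [indicator_of_mem hτ, intervalIntegral.integral_of_le hτ.1.le,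
        integral_Ioc_eq_integral_Ioo, ← integral_indicator measurableSet_Ioo]
      congr 1
      funext s
      by_cases hs : s ∈ Ioo (0:ℝ) τ
      · rw [indicator_of_mem hs, indicator_of_mem]
        exact ⟨hs.1, hs.2, hτ.2⟩
      · rw [indicator_of_notMem hs, indicator_of_notMem]
        intro hmem
        exact hs ⟨hmem.1, hmem.2.1⟩
    · rw [indicator_of_notMem hτ]
      have hz : ∀ s : ℝ,
          ({z : ℝ × ℝ | 0 < z.2 ∧ z.2 < z.1 ∧ z.1 < t}).indicator (fun z => F z.1 z.2) (τ, s)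
            = 0 := by
        intro s
        refine indicator_of_notMem (fun hmem => hτ ⟨lt_trans hmem.1 hmem.2.1, hmem.2.2⟩) _
      simp only [hz, integral_zero]
  have L2 : (∫ s in (0:ℝ)..t, ∫ τ in s..t, F τ s)
      = ∫ s : ℝ, ∫ τ : ℝ,
        ({z : ℝ × ℝ | 0 < z.2 ∧ z.2 < z.1 ∧ z.1 < t}).indicator (fun z => F z.1 z.2) (τ, s) := by
    rw [intervalIntegral.integral_of_le ht.le, integral_Ioc_eq_integral_Ioo,
      ← integral_indicator measurableSet_Ioo]
    congr 1
    funext s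
    by_cases hs : s ∈ Ioo (0:ℝ) t
    · rw [indicator_of_mem hs, intervalIntegral.integral_of_le hs.2.le,
        integral_Ioc_eq_integral_Ioo, ← integral_indicator measurableSet_Ioo]
      congr 1
      funext τ
      by_cases hτ : τ ∈ Ioo s t
      · rw [indicator_of_mem hτ, indicator_of_mem]
        exact ⟨hs.1, hτ.1, hτ.2⟩
      · rw [indicator_of_notMem hτ, indicator_of_notMem]
        intro hmem
        exact hτ ⟨hmem.2.1, hmem.2.2⟩
    · rw [indicator_of_notMem hs]
      have hz : ∀ τ : ℝ,
          ({z : ℝ × ℝ | 0 < z.2 ∧ z.2 < z.1 ∧ z.1 < t}).indicator (fun z => F z.1 z.2) (τ, s)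
            = 0 := by
        intro τ
        refine indicator_of_notMem (fun hmem => hs ⟨hmem.1, lt_trans hmem.2.1 hmem.2.2⟩) _
      simp only [hz, integral_zero]
  rw [L1, L2]
  exact MeasureTheory.integral_integral_swap hGvol


end Stmt14Aux

theorem stmt_14 (α μ : ℝ) (hα : α ∈ Set.Ioo (0:ℝ) 1) (hμ : 0 ≤ μ)
    (k l : ℝ → ℝ)
    (hk : ∀ t, k t = rlKernel (1 - α) t * Real.exp (-μ * t))
    (hl : ∀ t, l t = rlKernel α t * Real.exp (-μ * t)
        + μ * ∫ τ in (0:ℝ)..t, rlKernel α τ * Real.exp (-μ * τ)) :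
    ∀ t : ℝ, 0 < t → (∫ τ in (0:ℝ)..t, k (t - τ) * l τ) = 1 := by
  obtain ⟨h0, h1⟩ := hα
  have h1α : (0:ℝ) < 1 - α := by linarith
  intro t ht
  set nn : ℝ → ℝ := fun τ => rlKernel α τ * Real.exp (-μ * τ) with hnn
  set mm : ℝ → ℝ := fun u => rlKernel (1 - α) u * Real.exp (-μ * u) with hmm
  set N : ℝ → ℝ := fun τ => ∫ s in (0:ℝ)..τ, nn s with hN
  -- basic integrability and measurability
  have hnInt : ∀ a b : ℝ, IntervalIntegrable nn volume a b := fun a b =>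
    Stmt14Aux.intervalIntegrable_ker h0 μ a b
  have hmInt : ∀ a b : ℝ, IntervalIntegrable mm volume a b := fun a b =>
    Stmt14Aux.intervalIntegrable_ker h1α μ a b
  have hmtInt : IntervalIntegrable (fun τ => mm (t - τ)) volume 0 t := by
    have := ((hmInt 0 t).comp_sub_left t).symm
    simpa using this
  have hnIoo : IntegrableOn nn (Ioo 0 t) volume :=
    ((intervalIntegrable_iff_integrableOn_Ioc_of_le ht.le).1 (hnInt 0 t)).mono_set
      Ioo_subset_Ioc_self
  have hmIoo : IntegrableOn mm (Ioo 0 t) volume :=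
    ((intervalIntegrable_iff_integrableOn_Ioc_of_le ht.le).1 (hmInt 0 t)).mono_set
      Ioo_subset_Ioc_self
  have hmtIoo : IntegrableOn (fun τ => mm (t - τ)) (Ioo 0 t) volume :=
    ((intervalIntegrable_iff_integrableOn_Ioc_of_le ht.le).1 hmtInt).mono_set
      Ioo_subset_Ioc_self
  have hnMeas : Measurable nn := Stmt14Aux.measurable_ker α μ
  have hmMeas : Measurable mm := Stmt14Aux.measurable_ker (1 - α) μ
  -- the product nn τ * mm (t - τ) is interval integrable on [0, t]
  have hprod : IntervalIntegrable (fun τ => nn τ * mm (t - τ)) volume 0 t := by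
    have half1 : IntervalIntegrable (fun τ => nn τ * mm (t - τ)) volume 0 (t / 2) := by
      refine (hnInt 0 (t / 2)).mul_continuousOn ?_
      refine ContinuousOn.comp (Stmt14Aux.contOn_ker (1 - α) μ
        (s := Ioi 0) (fun x hx => ne_of_gt hx))
        ((continuous_const.sub continuous_id).continuousOn) ?_
      intro τ hτ
      rw [uIcc_of_le (by linarith : (0:ℝ) ≤ t / 2)] at hτ
      have : (0:ℝ) < t - τ := by linarith [hτ.2]
      exact mem_Ioi.mpr this
    have half2 : IntervalIntegrable (fun τ => nn τ * mm (t - τ)) volume (t / 2) t := by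
      have hmt2 : IntervalIntegrable (fun τ => mm (t - τ)) volume (t / 2) t := by
        have h2 := ((hmInt 0 (t / 2)).comp_sub_left t).symm
        have e1 : t - t / 2 = t / 2 := by ring
        rw [e1, sub_zero] at h2
        exact h2
      refine hmt2.continuousOn_mul ?_
      refine (Stmt14Aux.contOn_ker α μ (s := uIcc (t / 2) t) ?_)
      intro x hx
      rw [uIcc_of_le (by linarith : t / 2 ≤ t)] at hx
      have : 0 < x := lt_of_lt_of_le (by linarith) hx.1
      exact ne_of_gt this
    exact half1.trans half2
  -- N is continuous on [0, t]
  have hNcont : ContinuousOn N (uIcc 0 t) :=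
    intervalIntegral.continuousOn_primitive_interval' (hnInt 0 t) left_mem_uIcc
  have hNmm : IntervalIntegrable (fun τ => N τ * mm (t - τ)) volume 0 t :=
    hmtInt.continuousOn_mul hNcont
  -- split the integral
  have hkl : ∀ τ, k (t - τ) * l τ = nn τ * mm (t - τ) + μ * (N τ * mm (t - τ)) := by
    intro τ
    rw [hk, hl]
    simp only [hnn, hmm, hN]
    ring
  have hsplit : (∫ τ in (0:ℝ)..t, k (t - τ) * l τ)
      = (∫ τ in (0:ℝ)..t, nn τ * mm (t - τ)) + μ * ∫ τ in (0:ℝ)..t, N τ * mm (t - τ) := by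
    simp_rw [hkl]
    rw [intervalIntegral.integral_add hprod (hNmm.const_mul μ),
      intervalIntegral.integral_const_mul]
  -- step A
  have hA : (∫ τ in (0:ℝ)..t, nn τ * mm (t - τ)) = Real.exp (-μ * t) := by
    simp only [hnn, hmm]
    exact Stmt14Aux.conv_exp h0 h1 ht
  -- triangle integrabilities
  have hTsub : {z : ℝ × ℝ | 0 < z.2 ∧ z.2 < z.1 ∧ z.1 < t} ⊆ Ioo 0 t ×ˢ Ioo 0 t := by
    intro z hz
    exact Set.mem_prod.mpr ⟨⟨lt_trans hz.1 hz.2.1, hz.2.2⟩, ⟨hz.1, lt_trans hz.2.1 hz.2.2⟩⟩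
  have hTmeas : MeasurableSet {z : ℝ × ℝ | 0 < z.2 ∧ z.2 < z.1 ∧ z.1 < t} := by
    simp only [Set.setOf_and]
    exact (measurableSet_lt measurable_const measurable_snd).inter
      ((measurableSet_lt measurable_snd measurable_fst).inter
        (measurableSet_lt measurable_fst measurable_const))
  have hI1 : Integrable (({z : ℝ × ℝ | 0 < z.2 ∧ z.2 < z.1 ∧ z.1 < t}).indicator
      (fun z => nn z.2 * mm (t - z.1))) (volume : Measure (ℝ × ℝ)) := by
    refine Stmt14Aux.integrable_indicator_of_le hTmeas hTsub
      ((hnMeas.comp measurable_snd).mul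
        (hmMeas.comp (measurable_const.sub measurable_fst)))
      (a := fun u => mm (t - u)) (b := nn) ?_ hmtIoo hnIoo
    intro z _
    rw [norm_mul]
    exact le_of_eq (mul_comm _ _)
  have hI2 : Integrable (({z : ℝ × ℝ | 0 < z.2 ∧ z.2 < z.1 ∧ z.1 < t}).indicator
      (fun z => nn z.2 * mm (z.1 - z.2))) (volume : Measure (ℝ × ℝ)) := by
    have hT'sub : {z : ℝ × ℝ | 0 < z.2 ∧ 0 < z.1 ∧ z.1 + z.2 < t} ⊆ Ioo 0 t ×ˢ Ioo 0 t := by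
      intro z hz
      obtain ⟨a, b, c⟩ := hz
      exact Set.mem_prod.mpr ⟨⟨b, by linarith⟩, ⟨a, by linarith⟩⟩
    have hT'meas : MeasurableSet {z : ℝ × ℝ | 0 < z.2 ∧ 0 < z.1 ∧ z.1 + z.2 < t} := by
      simp only [Set.setOf_and]
      exact (measurableSet_lt measurable_const measurable_snd).inter
        ((measurableSet_lt measurable_const measurable_fst).inter
          (measurableSet_lt (measurable_fst.add measurable_snd) measurable_const))
    have hH : Integrable (({z : ℝ × ℝ | 0 < z.2 ∧ 0 < z.1 ∧ z.1 + z.2 < t}).indicator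
        (fun z => nn z.2 * mm z.1)) (volume : Measure (ℝ × ℝ)) := by
      refine Stmt14Aux.integrable_indicator_of_le hT'meas hT'sub
        ((hnMeas.comp measurable_snd).mul (hmMeas.comp measurable_fst))
        (a := mm) (b := nn) ?_ hmIoo hnIoo
      intro z _
      rw [norm_mul]
      exact le_of_eq (mul_comm _ _)
    have heq : (({z : ℝ × ℝ | 0 < z.2 ∧ z.2 < z.1 ∧ z.1 < t}).indicator
        (fun z => nn z.2 * mm (z.1 - z.2)))
        = (({z : ℝ × ℝ | 0 < z.2 ∧ 0 < z.1 ∧ z.1 + z.2 < t}).indicator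
            (fun z => nn z.2 * mm z.1)) ∘ (fun z : ℝ × ℝ => (z.1 - z.2, z.2)) := by
      funext z
      simp only [Function.comp_apply, Set.indicator_apply]
      have hiff : (z ∈ {z : ℝ × ℝ | 0 < z.2 ∧ z.2 < z.1 ∧ z.1 < t})
          ↔ ((z.1 - z.2, z.2) ∈ {z : ℝ × ℝ | 0 < z.2 ∧ 0 < z.1 ∧ z.1 + z.2 < t}) := by
        simp only [Set.mem_setOf_eq]
        constructor
        · rintro ⟨a, b, c⟩
          refine ⟨a, by linarith, ?_⟩
          show z.1 - z.2 + z.2 < t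
          linarith
        · rintro ⟨a, b, c⟩
          have a' : 0 < z.2 := a
          have b' : 0 < z.1 - z.2 := b
          have c' : z.1 - z.2 + z.2 < t := c
          exact ⟨a', by linarith, by linarith⟩
      rw [if_congr hiff rfl rfl]
    rw [heq, Measure.volume_eq_prod]
    refine ((measurePreserving_sub_prod volume volume).integrable_comp ?_).2 ?_
    · rw [← Measure.volume_eq_prod]
      exact hH.aestronglyMeasurable
    · rw [← Measure.volume_eq_prod]
      exact hH
  -- tri_swap applications
  have hswap1 := Stmt14Aux.tri_swap ht (fun τ s => nn s * mm (t - τ)) hI1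
  have hswap2 := Stmt14Aux.tri_swap ht (fun τ s => nn s * mm (τ - s)) hI2
  -- step B
  have hB : (∫ τ in (0:ℝ)..t, N τ * mm (t - τ)) = ∫ w in (0:ℝ)..t, Real.exp (-μ * w) := by
    have e1 : (∫ τ in (0:ℝ)..t, N τ * mm (t - τ))
        = ∫ τ in (0:ℝ)..t, ∫ s in (0:ℝ)..τ, nn s * mm (t - τ) := by
      refine intervalIntegral.integral_congr fun τ _ => ?_
      simp only [hN]
      rw [intervalIntegral.integral_mul_const]
    have e3 : ∀ s : ℝ, (∫ τ in s..t, nn s * mm (t - τ))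
        = nn s * ∫ u in (0:ℝ)..(t - s), mm u := by
      intro s
      rw [intervalIntegral.integral_const_mul]
      congr 1
      rw [intervalIntegral.integral_comp_sub_left (fun u => mm u) t, sub_self]
    have f1 : (∫ w in (0:ℝ)..t, Real.exp (-μ * w))
        = ∫ w in (0:ℝ)..t, ∫ s in (0:ℝ)..w, nn s * mm (w - s) := by
      refine intervalIntegral.integral_congr_ae ?_
      refine Filter.Eventually.of_forall fun w hw => ?_
      rw [uIoc_of_le ht.le] at hw
      have := Stmt14Aux.conv_exp (μ := μ) h0 h1 hw.1
      simp only [hnn, hmm]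
      exact this.symm
    have f3 : ∀ s : ℝ, (∫ w in s..t, nn s * mm (w - s))
        = nn s * ∫ u in (0:ℝ)..(t - s), mm u := by
      intro s
      rw [intervalIntegral.integral_const_mul]
      congr 1
      rw [intervalIntegral.integral_comp_sub_right (fun u => mm u) s, sub_self]
    calc (∫ τ in (0:ℝ)..t, N τ * mm (t - τ))
        = ∫ τ in (0:ℝ)..t, ∫ s in (0:ℝ)..τ, nn s * mm (t - τ) := e1
      _ = ∫ s in (0:ℝ)..t, ∫ τ in s..t, nn s * mm (t - τ) := hswap1
      _ = ∫ s in (0:ℝ)..t, nn s * ∫ u in (0:ℝ)..(t - s), mm u := by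
          refine intervalIntegral.integral_congr fun s _ => e3 s
      _ = ∫ s in (0:ℝ)..t, ∫ w in s..t, nn s * mm (w - s) := by
          refine intervalIntegral.integral_congr fun s _ => (f3 s).symm
      _ = ∫ w in (0:ℝ)..t, ∫ s in (0:ℝ)..w, nn s * mm (w - s) := hswap2.symm
      _ = ∫ w in (0:ℝ)..t, Real.exp (-μ * w) := f1.symm
  -- the exponential integral
  have hExp : μ * ∫ w in (0:ℝ)..t, Real.exp (-μ * w) = 1 - Real.exp (-μ * t) := by
    rcases eq_or_lt_of_le hμ with hμ0 | hμpos
    · simp [← hμ0]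
    · have hc : (-μ) ≠ 0 := by linarith
      have := intervalIntegral.integral_comp_mul_left (a := (0:ℝ)) (b := t) Real.exp hc
      rw [this, mul_zero, integral_exp, Real.exp_zero, smul_eq_mul]
      field_simp
      ring
  rw [hsplit, hA, hB, hExp]
  ring
end
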